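/- arXiv:2411.02386 — 3 statements merged into one kernel-verified Lean document; each statement's English description precedes it below -/
import Mathlib

section
/- Let G be a top-branching 1-GVAS and B ∈ ℕ. Suppose that for each lower nonterminal V ∈ Low(G) there exists a thin 1-GVAS H_V with R_{H_V} = R_{G_V}, and that for each top nonterminal X of G there exists a thin 1-GVAS H_X with R_{H_X} ⊆ R_{G_X} and R_{H_X} ∩ (ℕ² ∖ [0,B]²) = R_{G_X} ∩ (ℕ² ∖ [0,B]²), where G_W denotes G with initial nonterminal changed to W. Then there exists a thin 1-GVAS H with R_H = R_G. -/
namespace GVASPaper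

/-- A one-dimensional Grammar Vector Addition System: a context-free grammar
whose terminals are integers. -/
abbrev GVAS1 : Type 1 := ContextFreeGrammar ℤ

/-- A run (list of integers) is valid at `a` if no prefix sum drops `a` below zero. -/
def ValidRun (a : ℕ) (w : List ℤ) : Prop :=
  ∀ j : ℕ, 0 ≤ (a : ℤ) + (w.take j).sum

namespace GVAS1

/-- `a →_{𝒮(G)} b`: some complete derivation from the initial nonterminal yields a run
valid at `a` with total effect `b - a`. -/
def Reach (g : GVAS1) (a b : ℕ) : Prop :=
  ∃ w : List ℤ,
    g.Derives [Symbol.nonterminal g.initial] (w.map Symbol.terminal) ∧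
    ValidRun a w ∧ (a : ℤ) + w.sum = (b : ℤ)

/-- The reachability relation `R_G ⊆ ℕ²`. -/
def RRel (g : GVAS1) : Set (ℕ × ℕ) := {p | g.Reach p.1 p.2}

/-- A nonterminal is branching if it derives a sentential form containing
two copies of itself. -/
def Branching (g : GVAS1) (X : g.NT) : Prop :=
  ∃ α β γ : List (Symbol ℤ g.NT),
    g.Derives [Symbol.nonterminal X]
      (α ++ Symbol.nonterminal X :: (β ++ Symbol.nonterminal X :: γ))

/-- A 1-GVAS is thin if all its nonterminals are thin (not branching). -/
def Thin (g : GVAS1) : Prop := ∀ X : g.NT, ¬ g.Branching X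

/-- Edge of the graph of the grammar: `Y` occurs in the right-hand side of a rule for `X`. -/
def Edge (g : GVAS1) (X Y : g.NT) : Prop :=
  ∃ r ∈ g.rules, r.input = X ∧ Symbol.nonterminal Y ∈ r.output

/-- `X` is in the top component: `X` and the initial nonterminal lie in the same
strongly connected component of the graph of the grammar. -/
def InTop (g : GVAS1) (X : g.NT) : Prop :=
  Relation.ReflTransGen g.Edge g.initial X ∧ Relation.ReflTransGen g.Edge X g.initial

/-- A 1-GVAS is top-branching if the nonterminals of its top component are branching. -/
def TopBranching (g : GVAS1) : Prop :=
  ∀ X : g.NT, g.InTop X → g.Branching X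

/-- The same grammar with the initial nonterminal changed to `V`. -/
def withInit (g : GVAS1) (V : g.NT) : GVAS1 :=
  { g with initial := V }

end GVAS1

/-! ### Auxiliary constructions -/

section Aux

variable {N : Type}

/-- Lift a symbol over nonterminals `N` to a symbol over `Option N`. -/
def liftSym : Symbol ℤ N → Symbol ℤ (Option N)
  | .terminal t => .terminal t
  | .nonterminal n => .nonterminal (some n)

@[simp] lemma liftSym_terminal (t : ℤ) :
    liftSym (Symbol.terminal t : Symbol ℤ N) = Symbol.terminal t := rfl

@[simp] lemma liftSym_nonterminal (n : N) :
    liftSym (Symbol.nonterminal n : Symbol ℤ N) = Symbol.nonterminal (some n) := rfl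

lemma liftSym_injective : Function.Injective (liftSym (N := N)) := by
  intro a b h; cases a <;> cases b <;> simp_all [liftSym]

lemma liftSym_ne_none (s : Symbol ℤ N) : liftSym s ≠ Symbol.nonterminal none := by
  cases s <;> simp [liftSym]

lemma liftSym_eq_nonterminal {s : Symbol ℤ N} {n : N}
    (h : liftSym s = Symbol.nonterminal (some n)) : s = Symbol.nonterminal n := by
  cases s <;> simp_all [liftSym]

/-- Lift a rule over `N` to a rule over `Option N`. -/
def liftRule (r : ContextFreeRule ℤ N) : ContextFreeRule ℤ (Option N) :=
  ⟨some r.input, r.output.map liftSym⟩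

/-- The rule `none → [-a, b]`. -/
def pairRule (a b : ℕ) : ContextFreeRule ℤ (Option N) :=
  ⟨none, [Symbol.terminal (-(a : ℤ)), Symbol.terminal (b : ℤ)]⟩

/-- The rule `none → some n`. -/
def startRule (n : N) : ContextFreeRule ℤ (Option N) :=
  ⟨none, [Symbol.nonterminal (some n)]⟩

end Aux

/-- The union grammar: a fresh start symbol that either dispatches to the grammar `g`
or produces `[-a, b]` for a pair `(a,b) ∈ [0,B]²` with `P a b`. -/
@[reducible] noncomputable def combo (g : GVAS1) (P : ℕ → ℕ → Prop) (B : ℕ) : GVAS1 :=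
  letI := Classical.decEq (ContextFreeRule ℤ (Option g.NT))
  letI := Classical.decPred fun p : ℕ × ℕ => P p.1 p.2
  { NT := Option g.NT
    initial := none
    rules := insert (startRule g.initial)
      (g.rules.image liftRule ∪
        (((Finset.range (B + 1)) ×ˢ Finset.range (B + 1)).filter
            (fun p : ℕ × ℕ => P p.1 p.2)).image (fun p => pairRule p.1 p.2)) }

variable {g : GVAS1} {P : ℕ → ℕ → Prop} {B : ℕ}

lemma mem_combo_rules {r : ContextFreeRule ℤ (Option g.NT)} :
    r ∈ (combo g P B).rules ↔
      r = startRule g.initial ∨ (∃ r₀ ∈ g.rules, r = liftRule r₀) ∨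
      (∃ a b : ℕ, a ≤ B ∧ b ≤ B ∧ P a b ∧ r = pairRule a b) := by
  classical
  simp only [combo, Finset.mem_insert, Finset.mem_union, Finset.mem_image,
    Finset.mem_filter, Finset.mem_product, Finset.mem_range, Nat.lt_succ_iff, Prod.exists]
  constructor
  · rintro (rfl | ⟨r₀, hr₀, rfl⟩ | ⟨a, b, ⟨⟨ha, hb⟩, hP⟩, rfl⟩)
    · exact Or.inl rfl
    · exact Or.inr (Or.inl ⟨r₀, hr₀, rfl⟩)
    · exact Or.inr (Or.inr ⟨a, b, ha, hb, hP, rfl⟩)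
  · rintro (rfl | ⟨r₀, hr₀, rfl⟩ | ⟨a, b, ha, hb, hP, rfl⟩)
    · exact Or.inl rfl
    · exact Or.inr (Or.inl ⟨r₀, hr₀, rfl⟩)
    · exact Or.inr (Or.inr ⟨a, b, ⟨⟨ha, hb⟩, hP⟩, rfl⟩)

lemma combo_derives_lift {u v : List (Symbol ℤ g.NT)} (h : g.Derives u v) :
    (combo g P B).Derives (u.map liftSym) (v.map liftSym) := by
  induction h with
  | refl => rfl
  | tail _ step ih =>
    obtain ⟨r, hr, hrw⟩ := step
    refine ih.trans_produces ⟨liftRule r, mem_combo_rules.2 (Or.inr (Or.inl ⟨r, hr, rfl⟩)), ?_⟩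
    obtain ⟨p, q, rfl, rfl⟩ := hrw.exists_parts
    have := ContextFreeRule.rewrites_of_exists_parts (liftRule r)
      (p.map liftSym) (q.map liftSym)
    simpa [liftRule] using this

lemma map_lift_split {v₀ : List (Symbol ℤ g.NT)} {p q : List (Symbol ℤ (Option g.NT))}
    {n : g.NT} (h : v₀.map liftSym = p ++ Symbol.nonterminal (some n) :: q) :
    ∃ p₀ q₀, v₀ = p₀ ++ Symbol.nonterminal n :: q₀ ∧
      p = p₀.map liftSym ∧ q = q₀.map liftSym := by
  rw [List.map_eq_append_iff] at h
  obtain ⟨l₁, l₂, rfl, h₁, h₂⟩ := h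
  rw [List.map_eq_cons_iff] at h₂
  obtain ⟨s, t, rfl, hs, ht⟩ := h₂
  exact ⟨l₁, t, by rw [liftSym_eq_nonterminal hs], h₁.symm, ht.symm⟩

lemma combo_derives_proj {u₀ : List (Symbol ℤ g.NT)} {v : List (Symbol ℤ (Option g.NT))}
    (h : (combo g P B).Derives (u₀.map liftSym) v) :
    ∃ v₀, v = v₀.map liftSym ∧ g.Derives u₀ v₀ := by
  induction h with
  | refl => exact ⟨u₀, rfl, Relation.ReflTransGen.refl⟩
  | tail _ step ih =>
    obtain ⟨v₀, rfl, hd⟩ := ih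
    obtain ⟨r, hr, hrw⟩ := step
    obtain ⟨p, q, hv, rfl⟩ := hrw.exists_parts
    rw [List.append_assoc, List.singleton_append] at hv
    rcases mem_combo_rules.1 hr with rfl | ⟨r₀, hr₀, rfl⟩ | ⟨a, b, _, _, _, rfl⟩
    · exfalso
      have : Symbol.nonterminal (none : Option g.NT) ∈ v₀.map liftSym := by
        rw [hv]; simp [startRule]
      obtain ⟨s, _, hs⟩ := List.mem_map.1 this
      exact liftSym_ne_none s hs
    · obtain ⟨p₀, q₀, rfl, rfl, rfl⟩ := map_lift_split hv
      refine ⟨p₀ ++ r₀.output ++ q₀, by simp [liftRule], hd.trans_produces ⟨r₀, hr₀, ?_⟩⟩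
      have := ContextFreeRule.rewrites_of_exists_parts r₀ p₀ q₀
      simpa using this
    · exfalso
      have : Symbol.nonterminal (none : Option g.NT) ∈ v₀.map liftSym := by
        rw [hv]; simp [pairRule]
      obtain ⟨s, _, hs⟩ := List.mem_map.1 this
      exact liftSym_ne_none s hs

lemma derives_no_nt {g' : GVAS1} {u v : List (Symbol ℤ g'.NT)}
    (hu : ∀ n : g'.NT, Symbol.nonterminal n ∉ u) (h : g'.Derives u v) : v = u := by
  induction h with
  | refl => rfl
  | tail _ step ih =>
    subst ih
    obtain ⟨r, _, hrw⟩ := step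
    obtain ⟨p, q, hv, _⟩ := hrw.exists_parts
    exact absurd (by rw [hv]; simp) (hu r.input)

lemma combo_none_start {v : List (Symbol ℤ (Option g.NT))}
    (h : (combo g P B).Derives [Symbol.nonterminal none] v) :
    v = [Symbol.nonterminal none] ∨
    (combo g P B).Derives [Symbol.nonterminal (some g.initial)] v ∨
    ∃ a b : ℕ, a ≤ B ∧ b ≤ B ∧ P a b ∧
      v = [Symbol.terminal (-(a : ℤ)), Symbol.terminal (b : ℤ)] := by
  rcases h.eq_or_head with heq | ⟨w, ⟨r, hr, hrw⟩, hder⟩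
  · exact Or.inl heq.symm
  · obtain ⟨p, q, hu, rfl⟩ := hrw.exists_parts
    have hlen := congrArg List.length hu
    simp at hlen
    have hp : p = [] := List.eq_nil_of_length_eq_zero (by omega)
    have hq : q = [] := List.eq_nil_of_length_eq_zero (by omega)
    subst hp; subst hq
    simp only [List.nil_append, List.append_nil] at hu hder ⊢
    have hinput : r.input = none := by
      simpa using (congrArg (fun l => l.head?) hu).symm
    rcases mem_combo_rules.1 hr with rfl | ⟨r₀, hr₀, rfl⟩ | ⟨a, b, ha, hb, hP, rfl⟩
    · exact Or.inr (Or.inl hder)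
    · exact absurd hinput (by simp [liftRule])
    · refine Or.inr (Or.inr ⟨a, b, ha, hb, hP, ?_⟩)
      have := derives_no_nt (g' := combo g P B) (u := (pairRule a b : ContextFreeRule ℤ (Option g.NT)).output)
        (by intro n hn; simp [pairRule] at hn) hder
      simpa [pairRule] using this

lemma combo_thin (hg : GVAS1.Thin g) : GVAS1.Thin (combo g P B) := by
  intro X hX
  obtain ⟨α, β, γ, hder⟩ := hX
  cases X with
  | some n =>
    obtain ⟨v₀, hv, hd⟩ := combo_derives_proj
      (u₀ := [Symbol.nonterminal n]) (by simpa using hder)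
    obtain ⟨p₀, q₀, rfl, rfl, hq⟩ := map_lift_split hv.symm
    obtain ⟨p₁, q₁, rfl, rfl, rfl⟩ := map_lift_split hq.symm
    exact hg n ⟨p₀, p₁, q₁, hd⟩
  | none =>
    rcases combo_none_start hder with h | h | ⟨a, b, _, _, _, h⟩
    · have := congrArg List.length h
      simp at this
      omega
    · obtain ⟨v₀, hv, _⟩ := combo_derives_proj
        (u₀ := [Symbol.nonterminal g.initial]) (by simpa using h)
      have hmem : Symbol.nonterminal (none : Option g.NT) ∈ v₀.map liftSym := by
        rw [← hv]; simp
      obtain ⟨s, _, hs⟩ := List.mem_map.1 hmem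
      exact liftSym_ne_none s hs
    · have hmem : Symbol.nonterminal (none : Option g.NT) ∈
        ([Symbol.terminal (-(a : ℤ)), Symbol.terminal (b : ℤ)] :
          List (Symbol ℤ (Option g.NT))) := by
        rw [← h]; simp
      simp at hmem

lemma combo_language {w : List ℤ} :
    (combo g P B).Derives [Symbol.nonterminal none] (w.map Symbol.terminal) ↔
      g.Derives [Symbol.nonterminal g.initial] (w.map Symbol.terminal) ∨
      ∃ a b : ℕ, a ≤ B ∧ b ≤ B ∧ P a b ∧ w = [-(a : ℤ), (b : ℤ)] := by
  constructor
  · intro h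
    rcases combo_none_start h with h | h | ⟨a, b, ha, hb, hP, h⟩
    · exfalso
      rcases w with _ | ⟨x, w⟩ <;> simp at h
    · left
      obtain ⟨v₀, hv, hd⟩ := combo_derives_proj
        (u₀ := [Symbol.nonterminal g.initial]) (by simpa using h)
      have : v₀ = w.map Symbol.terminal := by
        apply List.map_injective_iff.2 liftSym_injective
        rw [← hv, List.map_map]
        rfl
      rwa [this] at hd
    · right
      refine ⟨a, b, ha, hb, hP, ?_⟩
      rcases w with _ | ⟨x, _ | ⟨y, _ | _⟩⟩ <;> simp_all
  · rintro (h | ⟨a, b, ha, hb, hP, rfl⟩)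
    · have h1 : (combo g P B).Produces [Symbol.nonterminal none]
          [Symbol.nonterminal (some g.initial)] :=
        ⟨startRule g.initial, mem_combo_rules.2 (Or.inl rfl),
          ContextFreeRule.Rewrites.input_output⟩
      have h2 := combo_derives_lift (P := P) (B := B) h
      have h3 : (w.map (Symbol.terminal : ℤ → Symbol ℤ g.NT)).map liftSym
          = w.map Symbol.terminal := by
        rw [List.map_map]; rfl
      rw [h3] at h2
      exact h1.trans_derives (by simpa using h2)
    · refine Relation.ReflTransGen.single
        ⟨pairRule a b, mem_combo_rules.2 (Or.inr (Or.inr ⟨a, b, ha, hb, hP, rfl⟩)), ?_⟩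
      exact ContextFreeRule.Rewrites.input_output

lemma reach_add {g' : GVAS1} {a b : ℕ} (h : g'.Reach a b) (k : ℕ) :
    g'.Reach (a + k) (b + k) := by
  obtain ⟨w, hd, hv, hs⟩ := h
  refine ⟨w, hd, fun j => ?_, ?_⟩
  · have := hv j; push_cast; linarith
  · push_cast at hs ⊢; linarith

/-- If `G` is top-branching, every lower nonterminal has a thin equivalent,
and every top nonterminal `X` has a thin 1-GVAS exactly under-approximating `G_X` outside
the square `[0,B]²`, then `G` admits an equivalent thin 1-GVAS. -/
theorem bounded_area (G : GVAS1) [Finite G.NT] (B : ℕ)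
    (htop : G.TopBranching)
    (hlow : ∀ V : G.NT, ¬ G.InTop V →
      ∃ HV : GVAS1, Finite HV.NT ∧ HV.Thin ∧ HV.RRel = (G.withInit V).RRel)
    (htopapp : ∀ X : G.NT, G.InTop X →
      ∃ HX : GVAS1, Finite HX.NT ∧ HX.Thin ∧
        HX.RRel ⊆ (G.withInit X).RRel ∧
        HX.RRel ∩ {p : ℕ × ℕ | ¬ (p.1 ≤ B ∧ p.2 ≤ B)} =
          (G.withInit X).RRel ∩ {p : ℕ × ℕ | ¬ (p.1 ≤ B ∧ p.2 ≤ B)}) :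
    ∃ H : GVAS1, Finite H.NT ∧ H.Thin ∧ H.RRel = G.RRel := by
  obtain ⟨HX, hFin, hThin, hsub, heq⟩ :=
    htopapp G.initial ⟨Relation.ReflTransGen.refl, Relation.ReflTransGen.refl⟩
  have hGinit : G.withInit G.initial = G := rfl
  rw [hGinit] at hsub heq
  refine ⟨combo HX (fun a b => G.Reach a b) B, ?_, combo_thin hThin, ?_⟩
  · haveI := hFin
    exact Finite.of_equiv _ (Equiv.optionEquivSumPUnit.{0,0} HX.NT).symm
  · ext ⟨a', b'⟩
    simp only [GVAS1.RRel, Set.mem_setOf_eq]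
    constructor
    · rintro ⟨w, hd, hv, hs⟩
      rcases combo_language.1 hd with h | ⟨a, b, ha, hb, hab, rfl⟩
      · exact hsub (show (a', b') ∈ HX.RRel from ⟨w, h, hv, hs⟩)
      · have ha' : a ≤ a' := by
          have := hv 1
          simp at this
          exact_mod_cast this
        obtain ⟨k, rfl⟩ := Nat.exists_eq_add_of_le ha'
        have hb' : b' = b + k := by
          simp at hs
          push_cast at hs
          omega
        rw [hb']
        exact reach_add hab k
    · intro h
      by_cases hsq : a' ≤ B ∧ b' ≤ B
      · refine ⟨[-(a' : ℤ), (b' : ℤ)],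
          combo_language.2 (Or.inr ⟨a', b', hsq.1, hsq.2, h, rfl⟩), ?_, ?_⟩
        · intro j
          rcases j with _ | _ | j <;> simp <;> push_cast <;> norm_num
        · simp
      · have hm : (a', b') ∈ HX.RRel ∩ {p : ℕ × ℕ | ¬ (p.1 ≤ B ∧ p.2 ≤ B)} := by
          rw [heq]; exact ⟨h, hsq⟩
        obtain ⟨w, hd, hv, hs⟩ := hm.1
        exact ⟨w, combo_language.2 (Or.inl hd), hv, hs⟩

end GVASPaper
end

section
/- Every thin context-free grammar is finite-index: for every thin context-free grammar G with initial nonterminal S there exists k ∈ ℕ such that for every word α over terminals derivable from S there is a sequence of sentential forms S = α₀ → α₁ → ⋯ → α_m = α, where each step replaces one occurrence of a nonterminal by the right-hand side of one of its rules, such that every α_i contains at most k occurrences of nonterminals. -/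
namespace GVASPaper

/-- A nonterminal is branching if it derives a sentential form containing two copies
of itself; it is thin otherwise. -/
def Branching {T : Type*} (g : ContextFreeGrammar T) (X : g.NT) : Prop :=
  ∃ α β γ : List (Symbol T g.NT),
    g.Derives [Symbol.nonterminal X]
      (α ++ Symbol.nonterminal X :: (β ++ Symbol.nonterminal X :: γ))

/-- The number of occurrences of nonterminals in a sentential form. -/
def countNT {T N : Type*} (w : List (Symbol T N)) : ℕ :=
  (w.filter fun s => match s with | Symbol.nonterminal _ => true | _ => false).length

section Infra

variable {T : Type*}

lemma countNT_append {N : Type*} (u v : List (Symbol T N)) :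
    countNT (u ++ v) = countNT u + countNT v := by
  simp [countNT]

lemma countNT_nil {N : Type*} : countNT ([] : List (Symbol T N)) = 0 := rfl

lemma countNT_nt {N : Type*} (X : N) : countNT [(Symbol.nonterminal X : Symbol T N)] = 1 := rfl

lemma countNT_t {N : Type*} (t : T) : countNT [(Symbol.terminal t : Symbol T N)] = 0 := rfl

lemma countNT_cons_nt {N : Type*} (X : N) (w : List (Symbol T N)) :
    countNT (Symbol.nonterminal X :: w) = 1 + countNT w := by
  have := countNT_append [(Symbol.nonterminal X : Symbol T N)] w
  simpa [countNT_nt] using this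

lemma countNT_cons_t {N : Type*} (t : T) (w : List (Symbol T N)) :
    countNT (Symbol.terminal t :: w) = countNT w := by
  have := countNT_append [(Symbol.terminal t : Symbol T N)] w
  simpa [countNT_t] using this

/-- A sentential form consisting only of terminals. -/
def AllT {N : Type*} (w : List (Symbol T N)) : Prop := ∀ s ∈ w, ∃ t : T, s = Symbol.terminal t

lemma AllT_map {N : Type*} (w : List T) :
    AllT (w.map (Symbol.terminal) : List (Symbol T N)) := by
  intro s hs
  simp only [List.mem_map] at hs
  obtain ⟨t, _, rfl⟩ := hs
  exact ⟨t, rfl⟩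

lemma AllT.countNT_eq_zero {N : Type*} {w : List (Symbol T N)} (h : AllT w) : countNT w = 0 := by
  simp only [countNT, List.length_eq_zero_iff, List.filter_eq_nil_iff]
  intro s hs
  obtain ⟨t, rfl⟩ := h s hs
  simp

lemma AllT.append_left {N : Type*} {u v : List (Symbol T N)} (h : AllT (u ++ v)) : AllT u :=
  fun s hs => h s (List.mem_append_left _ hs)

lemma AllT.append_right {N : Type*} {u v : List (Symbol T N)} (h : AllT (u ++ v)) : AllT v :=
  fun s hs => h s (List.mem_append_right _ hs)

lemma countNT_le_length {N : Type*} (w : List (Symbol T N)) : countNT w ≤ w.length :=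
  List.length_filter_le _ _

lemma exists_nt_of_countNT_ne_zero {N : Type*} {w : List (Symbol T N)} (h : countNT w ≠ 0) :
    ∃ Y : N, Symbol.nonterminal Y ∈ w := by
  simp only [countNT, ne_eq, List.length_eq_zero_iff] at h
  obtain ⟨s, hs⟩ := List.exists_mem_of_ne_nil _ h
  obtain ⟨hmem, hsat⟩ := List.mem_filter.mp hs
  cases s with
  | terminal t => simp at hsat
  | nonterminal Y => exact ⟨Y, hmem⟩

lemma rewrite_append_split {N : Type*} {r : ContextFreeRule T N} {x y v : List (Symbol T N)}
    (h : r.Rewrites (x ++ y) v) :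
    (∃ x', r.Rewrites x x' ∧ v = x' ++ y) ∨ (∃ y', r.Rewrites y y' ∧ v = x ++ y') := by
  rw [ContextFreeRule.rewrites_iff] at h
  obtain ⟨p, q, hu, hv⟩ := h
  rw [List.append_assoc] at hu
  rcases List.append_eq_append_iff.mp hu with ⟨a, rfl, hy⟩ | ⟨c, rfl, hq⟩
  · right
    refine ⟨a ++ r.output ++ q, ?_, ?_⟩
    · rw [ContextFreeRule.rewrites_iff]
      exact ⟨a, q, by simpa using hy, rfl⟩
    · simp [hv, List.append_assoc]
  · cases c with
    | nil =>
      right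
      simp only [List.nil_append] at hq
      refine ⟨r.output ++ q, ?_, ?_⟩
      · rw [ContextFreeRule.rewrites_iff]
        exact ⟨[], q, by simpa using hq.symm, rfl⟩
      · simp [hv]
    | cons hd tl =>
      left
      have hhd : hd = Symbol.nonterminal r.input ∧ q = tl ++ y := by
        have := hq
        simp only [List.singleton_append, List.cons_append, List.cons.injEq] at this
        exact ⟨this.1.symm, this.2⟩
      obtain ⟨rfl, rfl⟩ := hhd
      refine ⟨p ++ r.output ++ tl, ?_, ?_⟩
      · rw [ContextFreeRule.rewrites_iff]
        exact ⟨p, tl, by simp, rfl⟩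
      · simp [hv, List.append_assoc]

variable {g : ContextFreeGrammar T}

/-- Derivation in exactly `n` steps. -/
inductive DerIn (g : ContextFreeGrammar T) :
    List (Symbol T g.NT) → List (Symbol T g.NT) → ℕ → Prop
  | refl (u : List (Symbol T g.NT)) : DerIn g u u 0
  | head {u v w : List (Symbol T g.NT)} {n : ℕ} :
      g.Produces u v → DerIn g v w n → DerIn g u w (n + 1)

lemma DerIn.tail {u v w : List (Symbol T g.NT)} {n : ℕ}
    (h : DerIn g u v n) (hp : g.Produces v w) : DerIn g u w (n + 1) := by
  induction h with
  | refl => exact .head hp (.refl _)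
  | head h1 _ ih => exact .head h1 (ih hp)

lemma derives_to_derIn {u v : List (Symbol T g.NT)} (h : g.Derives u v) :
    ∃ n, DerIn g u v n := by
  induction h with
  | refl => exact ⟨0, .refl u⟩
  | tail _ hp ih => obtain ⟨n, hn⟩ := ih; exact ⟨n + 1, hn.tail hp⟩

lemma produces_append_split {x y v : List (Symbol T g.NT)} (h : g.Produces (x ++ y) v) :
    (∃ x', g.Produces x x' ∧ v = x' ++ y) ∨ (∃ y', g.Produces y y' ∧ v = x ++ y') := by
  obtain ⟨r, hr, hrw⟩ := h
  rcases rewrite_append_split hrw with ⟨x', hx, rfl⟩ | ⟨y', hy, rfl⟩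
  · exact .inl ⟨x', ⟨r, hr, hx⟩, rfl⟩
  · exact .inr ⟨y', ⟨r, hr, hy⟩, rfl⟩

lemma DerIn.append_split : ∀ {n : ℕ} {x y w : List (Symbol T g.NT)},
    DerIn g (x ++ y) w n →
    ∃ w₁ w₂ n₁ n₂, w = w₁ ++ w₂ ∧ n₁ + n₂ = n ∧ DerIn g x w₁ n₁ ∧ DerIn g y w₂ n₂ := by
  intro n
  induction n with
  | zero =>
    intro x y w h
    cases h
    exact ⟨x, y, 0, 0, rfl, rfl, .refl _, .refl _⟩
  | succ n ih =>
    intro x y w h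
    cases h with
    | head hp hd =>
      rcases produces_append_split hp with ⟨x', hx, rfl⟩ | ⟨y', hy, rfl⟩
      · obtain ⟨w₁, w₂, n₁, n₂, rfl, hn, h1, h2⟩ := ih hd
        exact ⟨w₁, w₂, n₁ + 1, n₂, rfl, by omega, .head hx h1, h2⟩
      · obtain ⟨w₁, w₂, n₁, n₂, rfl, hn, h1, h2⟩ := ih hd
        exact ⟨w₁, w₂, n₁, n₂ + 1, rfl, by omega, h1, .head hy h2⟩

lemma DerIn.allT {u w : List (Symbol T g.NT)} {n : ℕ} (hu : AllT u) (h : DerIn g u w n) :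
    w = u ∧ n = 0 := by
  cases h with
  | refl => exact ⟨rfl, rfl⟩
  | head hp _ =>
    exfalso
    obtain ⟨r, _, hrw⟩ := hp
    obtain ⟨p, q, hu', -⟩ := hrw.exists_parts
    have hmem : Symbol.nonterminal r.input ∈ u := by
      rw [hu']; simp
    obtain ⟨t, ht⟩ := hu _ hmem
    cases ht

lemma DerIn.head_nt {X : g.NT} {w : List (Symbol T g.NT)} {n : ℕ}
    (h : DerIn g [Symbol.nonterminal X] w (n + 1)) :
    ∃ r ∈ g.rules, r.input = X ∧ DerIn g r.output w n := by
  cases h with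
  | head hp hd =>
    obtain ⟨r, hr, hrw⟩ := hp
    obtain ⟨p, q, hu, hv⟩ := hrw.exists_parts
    have hp0 : p = [] ∧ q = [] ∧
        (Symbol.nonterminal r.input : Symbol T g.NT) = Symbol.nonterminal X := by
      cases p with
      | nil =>
        simp only [List.nil_append, List.singleton_append, List.cons.injEq] at hu
        exact ⟨rfl, hu.2.symm, hu.1.symm⟩
      | cons a l =>
        exfalso
        simp only [List.cons_append, List.cons.injEq] at hu
        have := congrArg List.length hu.2
        simp at this
    obtain ⟨rfl, rfl, hX⟩ := hp0
    simp only [List.append_nil, List.nil_append] at hv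
    subst hv
    exact ⟨r, hr, by injection hX, hd⟩

/-- `Reach g X Y` : from `X` one can derive a sentential form containing `Y`. -/
def Reach (g : ContextFreeGrammar T) (X Y : g.NT) : Prop :=
  ∃ p q : List (Symbol T g.NT),
    g.Derives [Symbol.nonterminal X] (p ++ Symbol.nonterminal Y :: q)

lemma Reach.refl (X : g.NT) : Reach g X X :=
  ⟨[], [], by rfl⟩

lemma derives_context {u v : List (Symbol T g.NT)} (p q : List (Symbol T g.NT))
    (h : g.Derives u v) : g.Derives (p ++ u ++ q) (p ++ v ++ q) :=
  (h.append_left p).append_right q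

lemma Reach.trans {X Y Z : g.NT} (h1 : Reach g X Y) (h2 : Reach g Y Z) : Reach g X Z := by
  obtain ⟨p, q, h1⟩ := h1
  obtain ⟨a, b, h2⟩ := h2
  refine ⟨p ++ a, b ++ q, ?_⟩
  have hctx : g.Derives (p ++ [Symbol.nonterminal Y] ++ q)
      (p ++ (a ++ Symbol.nonterminal Z :: b) ++ q) := derives_context p q h2
  have := h1.trans (by simpa using hctx :
    g.Derives (p ++ Symbol.nonterminal Y :: q) (p ++ (a ++ Symbol.nonterminal Z :: b) ++ q))
  simpa [List.append_assoc] using this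

lemma produces_rule {r : ContextFreeRule T g.NT} (hr : r ∈ g.rules) :
    g.Produces [Symbol.nonterminal r.input] r.output :=
  ⟨r, hr, (ContextFreeRule.rewrites_iff).mpr ⟨[], [], by simp, by simp⟩⟩

lemma reach_of_rule {r : ContextFreeRule T g.NT} (hr : r ∈ g.rules) {Y : g.NT}
    (hY : Symbol.nonterminal Y ∈ r.output) : Reach g r.input Y := by
  obtain ⟨p, q, hpq⟩ := List.append_of_mem hY
  exact ⟨p, q, Relation.ReflTransGen.single (by rw [← hpq]; exact produces_rule hr)⟩

/-- The rank of a nonterminal: the number of nonterminals strictly below it in the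
reachability preorder. -/
noncomputable def rank (g : ContextFreeGrammar T) (X : g.NT) : ℕ :=
  {Y | Reach g X Y ∧ ¬ Reach g Y X}.ncard

lemma rank_lt_of [Finite g.NT] {X Y : g.NT} (hXY : Reach g X Y) (hYX : ¬ Reach g Y X) :
    rank g Y < rank g X := by
  apply Set.ncard_lt_ncard
  · constructor
    · rintro Z ⟨hYZ, hZY⟩
      exact ⟨hXY.trans hYZ, fun hZX => hZY (hZX.trans hXY)⟩
    · intro hsub
      exact (hsub ⟨hXY, hYX⟩).2 (Reach.refl Y)
  · exact Set.toFinite _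

lemma rank_eq_of [Finite g.NT] {X Y : g.NT} (hXY : Reach g X Y) (hYX : Reach g Y X) :
    rank g Y = rank g X := by
  unfold rank
  congr 1
  ext Z
  constructor
  · rintro ⟨h1, h2⟩
    exact ⟨hXY.trans h1, fun h => h2 (h.trans hXY)⟩
  · rintro ⟨h1, h2⟩
    exact ⟨hYX.trans h1, fun h => h2 (h.trans hYX)⟩

lemma rank_le_card [Finite g.NT] (X : g.NT) : rank g X ≤ Nat.card g.NT := by
  rw [← Set.ncard_univ]
  exact Set.ncard_le_ncard (Set.subset_univ _) (Set.toFinite _)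

/-- Two back-reaching nonterminals in one sentential form derivable from `X`
make `X` branching. -/
lemma branching_of_two {X Y Z : g.NT} {p m s : List (Symbol T g.NT)}
    (h0 : g.Derives [Symbol.nonterminal X]
      (p ++ [Symbol.nonterminal Y] ++ m ++ [Symbol.nonterminal Z] ++ s))
    (hY : Reach g Y X) (hZ : Reach g Z X) : Branching g X := by
  obtain ⟨a, b, hY⟩ := hY
  obtain ⟨c, d, hZ⟩ := hZ
  refine ⟨p ++ a, b ++ m ++ c, d ++ s, ?_⟩
  have step1 : g.Derives (p ++ [Symbol.nonterminal Y] ++ (m ++ [Symbol.nonterminal Z] ++ s))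
      (p ++ (a ++ Symbol.nonterminal X :: b) ++ (m ++ [Symbol.nonterminal Z] ++ s)) :=
    derives_context _ _ hY
  have step2 : g.Derives
      ((p ++ (a ++ Symbol.nonterminal X :: b) ++ m) ++ [Symbol.nonterminal Z] ++ s)
      ((p ++ (a ++ Symbol.nonterminal X :: b) ++ m) ++ (c ++ Symbol.nonterminal X :: d) ++ s) :=
    derives_context _ _ hZ
  have h0' := h0.trans (by simpa [List.append_assoc] using step1)
  exact h0'.trans (by simpa [List.append_assoc] using step2)

/-- Bounded derivation: a derivation all of whose forms have at most `k` nonterminals. -/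
inductive BD (g : ContextFreeGrammar T) (k : ℕ) :
    List (Symbol T g.NT) → List (Symbol T g.NT) → Prop
  | refl (u : List (Symbol T g.NT)) : countNT u ≤ k → BD g k u u
  | head {u v w : List (Symbol T g.NT)} :
      g.Produces u v → countNT u ≤ k → BD g k v w → BD g k u w

lemma BD.trans {u v w : List (Symbol T g.NT)} {k : ℕ} (h1 : BD g k u v) (h2 : BD g k v w) :
    BD g k u w := by
  induction h1 with
  | refl => exact h2
  | head hp hc _ ih => exact .head hp hc (ih h2)

lemma BD.mono {u v : List (Symbol T g.NT)} {k k' : ℕ} (hk : k ≤ k') (h : BD g k u v) :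
    BD g k' u v := by
  induction h with
  | refl _ h => exact .refl _ (h.trans hk)
  | head hp hc _ ih => exact .head hp (hc.trans hk) ih

lemma produces_context {u v : List (Symbol T g.NT)} (p q : List (Symbol T g.NT))
    (h : g.Produces u v) : g.Produces (p ++ u ++ q) (p ++ v ++ q) := by
  obtain ⟨r, hr, hrw⟩ := h
  exact ⟨r, hr, (hrw.append_left p).append_right q⟩

lemma BD.context {u v : List (Symbol T g.NT)} {k : ℕ} (p q : List (Symbol T g.NT))
    (h : BD g k u v) : BD g (k + countNT p + countNT q) (p ++ u ++ q) (p ++ v ++ q) := by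
  induction h with
  | refl _ h => exact .refl _ (by simp only [countNT_append]; omega)
  | head hp hc _ ih =>
    exact .head (produces_context p q hp) (by simp only [countNT_append]; omega) ih

lemma BD.to_forms {u v : List (Symbol T g.NT)} {k : ℕ} (h : BD g k u v) :
    ∃ forms : List (List (Symbol T g.NT)),
      forms.Chain' g.Produces ∧ forms.head? = some u ∧ forms.getLast? = some v ∧
      ∀ φ ∈ forms, countNT φ ≤ k := by
  induction h with
  | refl u h =>
    exact ⟨[u], List.isChain_singleton u, rfl, rfl, by simpa using h⟩
  | head hp hc hd ih =>
    obtain ⟨forms, hch, hhd, hlast, hb⟩ := ih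
    rename_i u v w
    refine ⟨u :: forms, ?_, rfl, ?_, ?_⟩
    · simp only [List.Chain', List.isChain_cons]
      refine ⟨fun b hb => ?_, hch⟩
      rw [hhd] at hb
      cases hb
      exact hp
    · exact List.mem_getLast?_cons hlast
    · intro φ hφ
      rcases hφ with _ | hφ
      · exact hc
      · exact hb _ (by assumption)

/-- The sweep lemma: resolving a sentential form to terminals one nonterminal at a time. -/
lemma sweep {b : ℕ} (hb : 1 ≤ b) :
    ∀ (ss w : List (Symbol T g.NT)) (n : ℕ), DerIn g ss w n → AllT w →
    (∀ Y : g.NT, Symbol.nonterminal Y ∈ ss → ∀ (w' : List (Symbol T g.NT)) (n' : ℕ),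
      DerIn g [Symbol.nonterminal Y] w' n' → AllT w' →
      BD g b [Symbol.nonterminal Y] w') →
    BD g (b - 1 + countNT ss) ss w := by
  intro ss
  induction ss with
  | nil =>
    intro w n h _ _
    obtain ⟨rfl, -⟩ := h.allT (by intro s hs; simp at hs)
    exact .refl _ (by simp [countNT_nil])
  | cons s rest ih =>
    intro w n h hw hhandler
    have h' : DerIn g ([s] ++ rest) w n := by simpa using h
    obtain ⟨w₁, w₂, n₁, n₂, rfl, hn, h1, h2⟩ := h'.append_split
    have hw₁ : AllT w₁ := hw.append_left
    have hw₂ : AllT w₂ := hw.append_right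
    cases s with
    | terminal t =>
      obtain ⟨rfl, -⟩ := h1.allT (by rintro s hs; rw [List.mem_singleton] at hs; exact ⟨t, hs⟩)
      have hrest : BD g (b - 1 + countNT rest) rest w₂ :=
        ih w₂ n₂ h2 hw₂ (fun Y hm => hhandler Y (List.mem_cons_of_mem _ hm))
      have := hrest.context [Symbol.terminal t] []
      rw [countNT_cons_t]
      simpa [countNT_t, countNT_nil] using this
    | nonterminal Y =>
      have hY : BD g b [Symbol.nonterminal Y] w₁ :=
        hhandler Y List.mem_cons_self w₁ n₁ h1 hw₁
      have pieceA : BD g (b + countNT rest)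
          (Symbol.nonterminal Y :: rest) (w₁ ++ rest) := by
        have := hY.context [] rest
        simpa [countNT_nil] using this
      have hrest : BD g (b - 1 + countNT rest) rest w₂ :=
        ih w₂ n₂ h2 hw₂ (fun Z hm => hhandler Z (List.mem_cons_of_mem _ hm))
      have pieceB : BD g (b - 1 + countNT rest) (w₁ ++ rest) (w₁ ++ w₂) := by
        have := hrest.context w₁ []
        simpa [hw₁.countNT_eq_zero, countNT_nil] using this
      rw [countNT_cons_nt]
      have hbnd : b + countNT rest = b - 1 + (1 + countNT rest) := by omega
      rw [← hbnd]
      exact pieceA.trans (pieceB.mono (by omega))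

/-- Maximal length of a right-hand side of a rule. -/
noncomputable def maxLen (g : ContextFreeGrammar T) : ℕ :=
  g.rules.sup fun r => r.output.length

lemma output_len_le {r : ContextFreeRule T g.NT} (hr : r ∈ g.rules) :
    r.output.length ≤ maxLen g :=
  Finset.le_sup (f := fun r : ContextFreeRule T g.NT => r.output.length) hr

end Infra

section Main

variable {T : Type*} {g : ContextFreeGrammar T}

lemma arith_main (r' L c : ℕ) (hc : c ≤ L) :
    1 + r' * (L - 1) - 1 + c ≤ 1 + (r' + 1) * (L - 1) := by
  have h1 : (r' + 1) * (L - 1) = r' * (L - 1) + (L - 1) := by ring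
  rw [h1]
  generalize r' * (L - 1) = a
  omega

lemma arith_pieces (b K cp cq co : ℕ) (hb : 1 ≤ b) (hI : b - 1 + co ≤ K)
    (hcnt : co = cp + 1 + cq) :
    (b - 1 + cp + 0 + (1 + cq) ≤ K) ∧ (b - 1 + cq + (0 + 1) + 0 ≤ K) ∧ 1 ≤ K ∧
    (b - 1 + cp + cq + 1 ≤ K) := by omega

lemma main_lemma [Finite g.NT] (hthin : ∀ X : g.NT, ¬ Branching g X) :
    ∀ (r n : ℕ) (X : g.NT), rank g X ≤ r →
    ∀ w : List (Symbol T g.NT), DerIn g [Symbol.nonterminal X] w n → AllT w →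
    BD g (1 + r * (maxLen g - 1)) [Symbol.nonterminal X] w := by
  intro r
  induction r using Nat.strong_induction_on with
  | _ r ihr =>
  intro n
  induction n using Nat.strong_induction_on with
  | _ n ihn =>
  intro X hrk w hd hw
  obtain rfl | ⟨n', rfl⟩ : n = 0 ∨ ∃ n', n = n' + 1 := by
    cases n
    exacts [Or.inl rfl, Or.inr ⟨_, rfl⟩]
  · cases hd with
    | refl =>
      obtain ⟨t, ht⟩ := hw _ (List.mem_singleton_self _)
      exact absurd ht (by simp)
  · obtain ⟨ru, hru, hinp, hout⟩ := hd.head_nt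
    have hstep : g.Produces [Symbol.nonterminal X] ru.output := by
      have := produces_rule hru; rwa [hinp] at this
    have hder1 : g.Derives [Symbol.nonterminal X] ru.output :=
      Relation.ReflTransGen.single hstep
    have hlen : countNT ru.output ≤ maxLen g :=
      (countNT_le_length _).trans (output_len_le hru)
    have hb1 : (1:ℕ) ≤ 1 + (r - 1) * (maxLen g - 1) := Nat.le_add_right 1 _
    have hble : ∀ c : ℕ, c ≤ maxLen g → 1 ≤ r →
        1 + (r - 1) * (maxLen g - 1) - 1 + c ≤ 1 + r * (maxLen g - 1) := by
      intro c hc hr1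
      obtain ⟨r', rfl⟩ : ∃ r', r = r' + 1 := ⟨r - 1, by omega⟩
      simpa using arith_main r' (maxLen g) c hc
    have hnonspec : ∀ Y : g.NT, Symbol.nonterminal Y ∈ ru.output → ¬ Reach g Y X →
        (1 ≤ r ∧ rank g Y ≤ r - 1) := by
      intro Y hmem hnr
      have hXY : Reach g X Y := by
        have := reach_of_rule hru hmem; rwa [hinp] at this
      have hlt : rank g Y < rank g X := rank_lt_of hXY hnr
      omega
    have handler : ∀ Y : g.NT, Symbol.nonterminal Y ∈ ru.output → ¬ Reach g Y X →
        ∀ (w' : List (Symbol T g.NT)) (n' : ℕ), DerIn g [Symbol.nonterminal Y] w' n' →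
        AllT w' → BD g (1 + (r - 1) * (maxLen g - 1)) [Symbol.nonterminal Y] w' := by
      intro Y hmem hnr w' n'' hd' hw'
      obtain ⟨hr1, hry⟩ := hnonspec Y hmem hnr
      exact ihr (r - 1) (by omega) n'' Y hry w' hd' hw'
    by_cases hs : ∃ (Z : g.NT) (p q : List (Symbol T g.NT)),
        ru.output = p ++ Symbol.nonterminal Z :: q ∧ Reach g Z X
    · -- a special (back-reaching) occurrence exists
      obtain ⟨Z, p, q, hpq, hZX⟩ := hs
      have hXZ : Reach g X Z := ⟨p, q, hpq ▸ hder1⟩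
      have hnsP : ∀ Y : g.NT, Symbol.nonterminal Y ∈ p → ¬ Reach g Y X := by
        intro Y hm hre
        obtain ⟨p1, p2, rfl⟩ := List.append_of_mem hm
        refine hthin X (branching_of_two (p := p1) (m := p2) (s := q) ?_ hre hZX)
        have heq : ru.output =
            p1 ++ [Symbol.nonterminal Y] ++ p2 ++ [Symbol.nonterminal Z] ++ q := by
          rw [hpq]; simp [List.append_assoc]
        rw [← heq]; exact hder1
      have hnsQ : ∀ Y : g.NT, Symbol.nonterminal Y ∈ q → ¬ Reach g Y X := by
        intro Y hm hre
        obtain ⟨q1, q2, rfl⟩ := List.append_of_mem hm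
        refine hthin X (branching_of_two (p := p) (m := q1) (s := q2) ?_ hZX hre)
        have heq : ru.output =
            p ++ [Symbol.nonterminal Z] ++ q1 ++ [Symbol.nonterminal Y] ++ q2 := by
          rw [hpq]; simp [List.append_assoc]
        rw [← heq]; exact hder1
      have hmemP : ∀ Y : g.NT, Symbol.nonterminal Y ∈ p → Symbol.nonterminal Y ∈ ru.output := by
        intro Y hm; rw [hpq]; exact List.mem_append_left _ hm
      have hmemQ : ∀ Y : g.NT, Symbol.nonterminal Y ∈ q → Symbol.nonterminal Y ∈ ru.output := by
        intro Y hm; rw [hpq]; exact List.mem_append_right _ (List.mem_cons_of_mem _ hm)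
      have hout' : DerIn g (p ++ ([Symbol.nonterminal Z] ++ q)) w (n') := by
        rw [hpq] at hout; simpa using hout
      obtain ⟨u, v', n₁, n₂', rfl, hn1, hdp, hdzq⟩ := hout'.append_split
      obtain ⟨v, y, n₂, n₃, rfl, hn2, hdz, hdq⟩ := hdzq.append_split
      have hwu : AllT u := hw.append_left
      have hwv : AllT v := hw.append_right.append_left
      have hwy : AllT y := hw.append_right.append_right
      have hrZ : rank g Z ≤ r := by rw [rank_eq_of hXZ hZX]; exact hrk
      have hinner : BD g (1 + r * (maxLen g - 1)) [Symbol.nonterminal Z] v :=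
        ihn n₂ (by omega) Z hrZ v hdz hwv
      have hswP : BD g (1 + (r - 1) * (maxLen g - 1) - 1 + countNT p) p u :=
        sweep hb1 p u n₁ hdp hwu
          (fun Y hm => handler Y (hmemP Y hm) (hnsP Y hm))
      have hswQ : BD g (1 + (r - 1) * (maxLen g - 1) - 1 + countNT q) q y :=
        sweep hb1 q y n₃ hdq hwy
          (fun Y hm => handler Y (hmemQ Y hm) (hnsQ Y hm))
      have hcnt : countNT ru.output = countNT p + 1 + countNT q := by
        rw [hpq, show (p ++ Symbol.nonterminal Z :: q) =
          p ++ ([Symbol.nonterminal Z] ++ q) by simp,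
          countNT_append, countNT_append, countNT_nt]
        omega
      have hI : 1 + (r - 1) * (maxLen g - 1) - 1 + countNT ru.output ≤
          1 + r * (maxLen g - 1) := by
        rcases Nat.eq_zero_or_pos r with rfl | hr1
        · have hp0 : countNT p = 0 := by
            by_contra hc
            obtain ⟨Y, hm⟩ := exists_nt_of_countNT_ne_zero hc
            have := (hnonspec Y (hmemP Y hm) (hnsP Y hm)).1
            omega
          have hq0 : countNT q = 0 := by
            by_contra hc
            obtain ⟨Y, hm⟩ := exists_nt_of_countNT_ne_zero hc
            have := (hnonspec Y (hmemQ Y hm) (hnsQ Y hm)).1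
            omega
          simp [hcnt, hp0, hq0]
        · exact hble _ hlen hr1
      obtain ⟨hbA, hbB, hbK, hbD⟩ := arith_pieces _ _ (countNT p) (countNT q) _ hb1 hI hcnt
      have hbA' : (1 + (r - 1) * (maxLen g - 1) - 1 + countNT p) +
          countNT ([] : List (Symbol T g.NT)) + countNT ([Symbol.nonterminal Z] ++ q) ≤
          1 + r * (maxLen g - 1) := by
        rw [countNT_nil, countNT_append, countNT_nt]; exact hbA
      have hbB' : (1 + (r - 1) * (maxLen g - 1) - 1 + countNT q) +
          countNT (u ++ [Symbol.nonterminal Z]) + countNT ([] : List (Symbol T g.NT)) ≤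
          1 + r * (maxLen g - 1) := by
        rw [countNT_nil, countNT_append, countNT_nt, hwu.countNT_eq_zero]; exact hbB
      have hbC' : (1 + r * (maxLen g - 1)) + countNT u + countNT y ≤
          1 + r * (maxLen g - 1) := by
        simp [hwu.countNT_eq_zero, hwy.countNT_eq_zero]
      have pieceA : BD g (1 + r * (maxLen g - 1))
          (p ++ Symbol.nonterminal Z :: q) (u ++ Symbol.nonterminal Z :: q) := by
        have h := (hswP.context [] ([Symbol.nonterminal Z] ++ q)).mono hbA'
        simpa using h
      have pieceB : BD g (1 + r * (maxLen g - 1))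
          (u ++ Symbol.nonterminal Z :: q) (u ++ Symbol.nonterminal Z :: y) := by
        have h := (hswQ.context (u ++ [Symbol.nonterminal Z]) []).mono hbB'
        simpa using h
      have pieceC : BD g (1 + r * (maxLen g - 1))
          (u ++ Symbol.nonterminal Z :: y) (u ++ (v ++ y)) := by
        have h := (hinner.context u y).mono hbC'
        simpa using h
      refine BD.head ?_ ?_ ((pieceA.trans pieceB).trans pieceC)
      · rw [hpq] at hstep; exact hstep
      · rw [countNT_nt]; exact hbK
    · -- no special occurrence
      push_neg at hs
      have hns : ∀ Y : g.NT, Symbol.nonterminal Y ∈ ru.output → ¬ Reach g Y X := by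
        intro Y hmem
        obtain ⟨p, q, hpq⟩ := List.append_of_mem hmem
        exact hs Y p q hpq
      have hsw : BD g (1 + (r - 1) * (maxLen g - 1) - 1 + countNT ru.output) ru.output w :=
        sweep hb1 ru.output w n' hout hw (fun Y hm => handler Y hm (hns Y hm))
      have hbound : 1 + (r - 1) * (maxLen g - 1) - 1 + countNT ru.output ≤
          1 + r * (maxLen g - 1) := by
        rcases Nat.eq_zero_or_pos r with rfl | hr1
        · have hc0 : countNT ru.output = 0 := by
            by_contra hc
            obtain ⟨Y, hmem⟩ := exists_nt_of_countNT_ne_zero hc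
            have := (hnonspec Y hmem (hns Y hmem)).1
            omega
          simp [hc0]
        · exact hble _ hlen hr1
      exact BD.head hstep (by rw [countNT_nt]; exact Nat.le_add_right 1 _) (hsw.mono hbound)

end Main

/-- Every thin context-free grammar is finite-index: there is `k` such that
every word of terminals derivable from the initial nonterminal has a derivation all of whose
sentential forms contain at most `k` occurrences of nonterminals. -/
theorem thin_implies_finite_index {T : Type*} (g : ContextFreeGrammar T) [Finite g.NT]
    (hthin : ∀ X : g.NT, ¬ Branching g X) :
    ∃ k : ℕ, ∀ w : List T,
      g.Derives [Symbol.nonterminal g.initial] (w.map Symbol.terminal) →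
      ∃ forms : List (List (Symbol T g.NT)),
        forms.Chain' g.Produces ∧
        forms.head? = some [Symbol.nonterminal g.initial] ∧
        forms.getLast? = some (w.map Symbol.terminal) ∧
        ∀ φ ∈ forms, countNT φ ≤ k := by
  refine ⟨1 + Nat.card g.NT * (maxLen g - 1), fun w hder => ?_⟩
  obtain ⟨n, hd⟩ := derives_to_derIn hder
  exact (main_lemma hthin (Nat.card g.NT) n g.initial (rank_le_card _) _ hd (AllT_map w)).to_forms

end GVASPaper
end

section
/- Let G be a context-free grammar with n nonterminals in which every rule has right-hand side of length at most 2. Call a derivation irreducible if removing any simple cycle occurring in it (i.e. for any pair of nodes N, M with N a proper ancestor of M carrying the same nonterminal label and no label repeated along the path from N to M except at its endpoints, replacing the subtree rooted at N by the subtree rooted at M) strictly decreases the set of nonterminals occurring in the derivation. Then every irreducible derivation has all root-to-leaf paths of length at most n², and consequently has at most 2^{n²+1} nodes. -/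
namespace GVASPaper

/-- Derivation trees: leaves are labelled by symbols, internal nodes by nonterminals. -/
inductive DTree (T N : Type*) : Type _ where
  | leaf : Symbol T N → DTree T N
  | node : N → List (DTree T N) → DTree T N

namespace DTree

variable {T N : Type*}

/-- The yield of a derivation tree: labels of leaves read from left to right. -/
def yield : DTree T N → List (Symbol T N)
  | .leaf s => [s]
  | .node _ cs => cs.attach.flatMap (fun c => yield c.1)

decreasing_by
  simp only [DTree.node.sizeOf_spec]
  have := List.sizeOf_lt_of_mem c.2
  omega

/-- The label of the root of a tree. -/
def rootLabel : DTree T N → Symbol T N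
  | .leaf s => s
  | .node X _ => Symbol.nonterminal X

/-- Value of a symbol: terminals count with their integer value, nonterminals with 0. -/
def symEff : Symbol ℤ N → ℤ
  | .terminal t => t
  | .nonterminal _ => 0

/-- The effect of a derivation tree: the sum of the integers labelling its leaves. -/
def effect (t : DTree ℤ N) : ℤ := (t.yield.map symEff).sum

/-- A derivation is complete if all its leaves are labelled by terminals. -/
def IsComplete (t : DTree T N) : Prop :=
  ∀ s ∈ t.yield, ∃ z : T, s = Symbol.terminal z

/-- The run read by a complete derivation tree. -/
def run (t : DTree ℤ N) : List ℤ :=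
  t.yield.filterMap (fun s => match s with | Symbol.terminal z => some z | _ => none)

/-- Height of a tree: the maximal length (number of edges) of a root-to-leaf path. -/
def height : DTree T N → ℕ
  | .leaf _ => 0
  | .node _ cs => (cs.attach.map (fun c => height c.1)).foldr max 0 + 1

decreasing_by
  simp only [DTree.node.sizeOf_spec]
  have := List.sizeOf_lt_of_mem c.2
  omega

/-- Number of nodes of a tree. -/
def numNodes : DTree T N → ℕ
  | .leaf _ => 1
  | .node _ cs => (cs.attach.map (fun c => numNodes c.1)).sum + 1

decreasing_by
  simp only [DTree.node.sizeOf_spec]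
  have := List.sizeOf_lt_of_mem c.2
  omega

end DTree

/-- `Occurs X t`: the nonterminal `X` labels some node (internal or leaf) of `t`. -/
inductive Occurs {T N : Type*} (X : N) : DTree T N → Prop
  | leaf : Occurs X (.leaf (Symbol.nonterminal X))
  | here (cs : List (DTree T N)) : Occurs X (.node X cs)
  | child {Y : N} {cs : List (DTree T N)} {c : DTree T N} :
      c ∈ cs → Occurs X c → Occurs X (.node Y cs)

/-- `HasRepeat t`: some root-to-leaf path of `t` contains two nodes labelled by the
same nonterminal. -/
inductive HasRepeat {T N : Type*} : DTree T N → Prop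
  | here {X : N} {cs : List (DTree T N)} {c : DTree T N} :
      c ∈ cs → Occurs X c → HasRepeat (.node X cs)
  | child {Y : N} {cs : List (DTree T N)} {c : DTree T N} :
      c ∈ cs → HasRepeat c → HasRepeat (.node Y cs)

/-- Valid derivation trees of a context-free grammar (leaves may be labelled by anything;
every internal node is expanded according to a rule of the grammar). -/
inductive IsDeriv {T : Type*} (g : ContextFreeGrammar T) : DTree T g.NT → Prop
  | leaf (s : Symbol T g.NT) : IsDeriv g (.leaf s)
  | node (X : g.NT) (cs : List (DTree T g.NT)) (r : ContextFreeRule T g.NT)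
      (hr : r ∈ g.rules) (hX : r.input = X) (hout : cs.map DTree.rootLabel = r.output)
      (hcs : ∀ c ∈ cs, IsDeriv g c) : IsDeriv g (.node X cs)

/-- One-hole contexts of derivation trees; the hole stands for a distinguished leaf. -/
inductive CycCtx (T N : Type*) : Type _ where
  | hole : CycCtx T N
  | node : N → List (DTree T N) → CycCtx T N → List (DTree T N) → CycCtx T N

namespace CycCtx

variable {T N : Type*}

/-- Plugging a tree into the hole of a context. -/
def plug : CycCtx T N → DTree T N → DTree T N
  | .hole, t => t
  | .node X l c r, t => .node X (l ++ c.plug t :: r)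

/-- The root of the context is (labelled by) `X`. -/
def rootIs : CycCtx T N → N → Prop
  | .hole, _ => True
  | .node Y _ _ _, X => Y = X

/-- The left effect of a cycle: the sum of the integers labelling the leaves
to the left of the distinguished leaf. -/
def leftEff : CycCtx ℤ N → ℤ
  | .hole => 0
  | .node _ l c _ => (l.map DTree.effect).sum + c.leftEff

/-- The right effect of a cycle: the sum of the integers labelling the leaves
to the right of the distinguished leaf. -/
def rightEff : CycCtx ℤ N → ℤ
  | .hole => 0
  | .node _ _ c r => c.rightEff + (r.map DTree.effect).sum

/-- The global effect of a cycle. -/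
def globalEff (c : CycCtx ℤ N) : ℤ := c.leftEff + c.rightEff

/-- The labels of the nodes on the main branch of a cycle, from the root down to the
parent of the distinguished leaf. -/
def spine : CycCtx T N → List N
  | .hole => []
  | .node X _ c _ => X :: c.spine

end CycCtx

/-- A derivation is irreducible if removing any simple cycle occurring in it (replacing the
subtree rooted at the top of the cycle by the subtree rooted at its distinguished leaf)
strictly decreases the set of nonterminals occurring in the derivation. Here a simple cycle
occurrence is a decomposition `t = C.plug (γ.plug σ)` where the nonempty context `γ` starts
and ends with the same nonterminal `X` and has no label repeated along its main branch. -/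
def Irreducible {T : Type*} (g : ContextFreeGrammar T) (t : DTree T g.NT) : Prop :=
  ∀ (C γ : CycCtx T g.NT) (X : g.NT) (σ : DTree T g.NT),
    γ ≠ CycCtx.hole → γ.rootIs X → σ.rootLabel = Symbol.nonterminal X →
    γ.spine.Nodup → t = C.plug (γ.plug σ) →
    {Y : g.NT | Occurs Y (C.plug σ)} ⊂ {Y : g.NT | Occurs Y t}

section Aux

namespace CycCtx

variable {T N : Type*}

/-- Composition of contexts. -/
def comp : CycCtx T N → CycCtx T N → CycCtx T N
  | .hole, D => D
  | .node X l c r, D => .node X l (c.comp D) r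

@[simp] lemma plug_comp (C D : CycCtx T N) (t : DTree T N) :
    (C.comp D).plug t = C.plug (D.plug t) := by
  induction C with
  | hole => rfl
  | node X l c r ih => simp [comp, plug, ih]

@[simp] lemma spine_comp (C D : CycCtx T N) :
    (C.comp D).spine = C.spine ++ D.spine := by
  induction C with
  | hole => rfl
  | node X l c r ih => simp [comp, spine, ih]

/-- Truncating a context at depth `k`. -/
def ctake : ℕ → CycCtx T N → CycCtx T N
  | 0, _ => .hole
  | _+1, .hole => .hole
  | k+1, .node X l c r => .node X l (ctake k c) r

/-- Dropping the top `k` layers of a context. -/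
def cdrop : ℕ → CycCtx T N → CycCtx T N
  | 0, D => D
  | _+1, .hole => .hole
  | k+1, .node X l c r => cdrop k c

lemma ctake_comp_cdrop : ∀ (k : ℕ) (D : CycCtx T N), (ctake k D).comp (cdrop k D) = D
  | 0, D => rfl
  | _+1, .hole => rfl
  | k+1, .node X l c r => by simp [ctake, cdrop, comp, ctake_comp_cdrop k c]

lemma spine_ctake : ∀ (k : ℕ) (D : CycCtx T N), (ctake k D).spine = D.spine.take k
  | 0, D => by simp [ctake, spine]
  | _+1, .hole => by simp [ctake, spine]
  | k+1, .node X l c r => by simp [ctake, spine, spine_ctake k c]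

lemma spine_cdrop : ∀ (k : ℕ) (D : CycCtx T N), (cdrop k D).spine = D.spine.drop k
  | 0, D => by simp [cdrop]
  | _+1, .hole => by simp [cdrop, spine]
  | k+1, .node X l c r => by simp [cdrop, spine, spine_cdrop k c]

lemma eq_hole_of_spine_eq_nil : ∀ {C : CycCtx T N}, C.spine = [] → C = .hole
  | .hole, _ => rfl
  | .node X l c r, h => by simp [spine] at h

lemma rootIs_of_head? : ∀ {C : CycCtx T N} {X : N}, C.spine.head? = some X → C.rootIs X
  | .hole, X, _ => trivial
  | .node Y l c r, X, h => by
      simp [spine] at h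
      simpa [rootIs] using h

end CycCtx

/-- The root label of a tree, as a (possibly empty) list of nonterminals. -/
def sigLab {T N : Type*} : DTree T N → List N
  | .leaf (.nonterminal X) => [X]
  | .leaf (.terminal _) => []
  | .node X _ => [X]

lemma rootLabel_of_sigLab {T N : Type*} : ∀ {σ : DTree T N} {X : N},
    X ∈ sigLab σ → σ.rootLabel = Symbol.nonterminal X
  | .leaf (.nonterminal Y), X, h => by simp [sigLab] at h; simp [DTree.rootLabel, h]
  | .leaf (.terminal _), X, h => by simp [sigLab] at h
  | .node Y cs, X, h => by simp [sigLab] at h; simp [DTree.rootLabel, h]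

lemma occurs_of_rootLabel {T N : Type*} : ∀ {σ : DTree T N} {X : N},
    σ.rootLabel = Symbol.nonterminal X → Occurs X σ
  | .leaf s, X, h => by
      simp [DTree.rootLabel] at h; rw [h]; exact Occurs.leaf
  | .node Y cs, X, h => by
      simp [DTree.rootLabel] at h; rw [h]; exact Occurs.here cs

lemma rootLabel_plug {T N : Type*} {C : CycCtx T N} {σ : DTree T N} {X : N}
    (h : (C.spine ++ sigLab σ).head? = some X) :
    (C.plug σ).rootLabel = Symbol.nonterminal X := by
  cases C with
  | hole =>
    simp [CycCtx.spine] at h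
    exact rootLabel_of_sigLab (List.mem_of_mem_head? h)
  | node Y l c r =>
    simp [CycCtx.spine] at h
    simp [CycCtx.plug, DTree.rootLabel, h]

lemma occurs_plug {T N : Type*} {Y : N} (C : CycCtx T N) {σ : DTree T N}
    (h : Occurs Y σ) : Occurs Y (C.plug σ) := by
  induction C with
  | hole => exact h
  | node X l c r ih =>
    exact Occurs.child (List.mem_append_right _ (List.mem_cons_self)) ih

lemma occurs_of_mem_spine {T N : Type*} {X : N} {C : CycCtx T N}
    (h : X ∈ C.spine) (σ : DTree T N) : Occurs X (C.plug σ) := by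
  induction C with
  | hole => simp [CycCtx.spine] at h
  | node Y l c r ih =>
    simp only [CycCtx.spine, List.mem_cons] at h
    rcases h with rfl | h
    · exact Occurs.here _
    · exact Occurs.child (List.mem_append_right _ (List.mem_cons_self)) (ih h)

lemma occurs_plug_cases {T N : Type*} {Y : N} {C : CycCtx T N} {σ : DTree T N}
    (h : Occurs Y (C.plug σ)) (σ' : DTree T N) :
    Occurs Y (C.plug σ') ∨ Occurs Y σ := by
  induction C with
  | hole => exact Or.inr h
  | node X l c r ih =>
    rw [CycCtx.plug] at h
    cases h with
    | here => exact Or.inl (Occurs.here _)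
    | child hc ho =>
      rcases List.mem_append.1 hc with hc | hc
      · exact Or.inl (Occurs.child (List.mem_append_left _ hc) ho)
      · rcases List.mem_cons.1 hc with rfl | hc
        · rcases ih ho with h' | h'
          · exact Or.inl (Occurs.child
              (List.mem_append_right _ (List.mem_cons_self)) h')
          · exact Or.inr h'
        · exact Or.inl (Occurs.child
            (List.mem_append_right _ (List.mem_cons_of_mem _ hc)) ho)

end Aux

section Aux2

lemma exists_first_repeat {α : Type*} {L : List α} (h : ¬ L.Nodup) :
    ∃ i j, ∃ (hi : i < L.length) (hj : j < L.length), i < j ∧ (L.take j).Nodup ∧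
      L[i]'hi = L[j]'hj := by
  classical
  have hex : ∃ j, ¬ (L.take (j + 1)).Nodup := by
    refine ⟨L.length, ?_⟩
    rwa [List.take_of_length_le (by omega)]
  set j := Nat.find hex with hjdef
  have hspec : ¬ (L.take (j + 1)).Nodup := Nat.find_spec hex
  have hnodup : (L.take j).Nodup := by
    rcases Nat.eq_zero_or_pos j with hj0 | hj0
    · rw [hj0]; simp
    · have hmin := Nat.find_min hex (m := j - 1) (by omega)
      rw [not_not] at hmin
      rwa [Nat.sub_add_cancel hj0] at hmin
  have hjlen : j < L.length := by
    by_contra hc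
    apply h
    rwa [List.take_of_length_le (by omega)] at hnodup
  have hsucc : L.take (j + 1) = L.take j ++ [L[j]] := by
    rw [List.take_succ, List.getElem?_eq_getElem hjlen]
    rfl
  have hmemtake : L[j] ∈ L.take j := by
    by_contra hmem
    apply hspec
    rw [hsucc]
    exact hnodup.append (List.nodup_singleton _) (by simpa using hmem)
  obtain ⟨i, hi', hieq⟩ := List.getElem_of_mem hmemtake
  have hilen : i < j := by
    have := hi'
    rw [List.length_take] at this
    omega
  rw [List.getElem_take] at hieq
  exact ⟨i, j, by omega, hjlen, hilen, hnodup, hieq⟩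

lemma key_bound {T : Type*} (g : ContextFreeGrammar T) [Fintype g.NT]
    {t : DTree T g.NT} (hirr : Irreducible g t) :
    ∀ (k : ℕ) (D C : CycCtx T g.NT) (σ : DTree T g.NT),
      (D.spine ++ sigLab σ).length ≤ k → t = C.plug (D.plug σ) →
      (D.spine ++ sigLab σ).length ≤
        Fintype.card g.NT * {Y : g.NT | Occurs Y (D.plug σ)}.ncard := by
  classical
  intro k
  induction k with
  | zero => intro D C σ hk _; omega
  | succ k ih =>
    intro D C σ hk heq
    by_cases hnd : (D.spine ++ sigLab σ).Nodup
    · by_cases hnil : (D.spine ++ sigLab σ) = []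
      · simp [hnil]
      · obtain ⟨X, hXL⟩ := List.exists_mem_of_ne_nil _ hnil
        have hXocc : Occurs X (D.plug σ) := by
          rcases List.mem_append.1 hXL with hx | hx
          · exact occurs_of_mem_spine hx σ
          · exact occurs_plug D (occurs_of_rootLabel (rootLabel_of_sigLab hx))
        have h1 : 1 ≤ ({Y : g.NT | Occurs Y (D.plug σ)}).ncard :=
          (Set.ncard_pos (Set.toFinite _)).2 ⟨X, hXocc⟩
        have h2 : (D.spine ++ sigLab σ).length ≤ Fintype.card g.NT := hnd.length_le_card
        calc (D.spine ++ sigLab σ).length ≤ Fintype.card g.NT * 1 := by omega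
          _ ≤ _ := Nat.mul_le_mul_left _ h1
    · obtain ⟨i, j, hi, hj, hij, hndj, hgetij⟩ := exists_first_repeat hnd
      set L := D.spine ++ sigLab σ with hLdef
      set m := D.spine.length with hm
      have hsig : (sigLab σ).length ≤ 1 := by
        cases σ with
        | leaf s => cases s <;> simp [sigLab]
        | node => simp [sigLab]
      have hLlen : L.length = m + (sigLab σ).length := by simp [hLdef, hm]
      have hjm : j ≤ m := by omega
      have him : i < m := by omega
      set A := CycCtx.ctake i D with hA
      set E := CycCtx.cdrop i D with hE
      set γ := CycCtx.ctake (j - i) E with hγ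
      set B := CycCtx.cdrop (j - i) E with hB
      have hD : D = A.comp (γ.comp B) := by
        rw [hγ, hB, CycCtx.ctake_comp_cdrop, hA, hE, CycCtx.ctake_comp_cdrop]
      have hγspine : γ.spine = (L.take j).drop i := by
        have e1 : γ.spine = (D.spine.drop i).take (j - i) := by
          rw [hγ, CycCtx.spine_ctake, hE, CycCtx.spine_cdrop]
        have e2 : L.drop i = D.spine.drop i ++ sigLab σ := by
          rw [hLdef, List.drop_append_of_le_length him.le]
        have e3 : (L.drop i).take (j - i) = (D.spine.drop i).take (j - i) := by
          rw [e2, List.take_append_of_le_length (by simp [hm]; omega)]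
        rw [e1, ← e3, List.drop_take]
      have hBspine : B.spine ++ sigLab σ = L.drop j := by
        have h1 : B.spine = D.spine.drop j := by
          rw [hB, CycCtx.spine_cdrop, hE, CycCtx.spine_cdrop, List.drop_drop]
          congr 1
          omega
        rw [h1, hLdef, List.drop_append_of_le_length hjm]
      set X := L[i]'hi with hX
      have hγne : γ ≠ CycCtx.hole := by
        intro hc
        have hlenγ : γ.spine.length = j - i := by
          rw [hγspine]
          simp [List.length_drop, List.length_take]
          omega
        rw [hc] at hlenγ
        simp [CycCtx.spine] at hlenγ
        omega
      have hγroot : γ.rootIs X := by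
        apply CycCtx.rootIs_of_head?
        rw [hγspine, List.head?_drop, List.getElem?_take_of_lt hij,
          List.getElem?_eq_getElem hi]
      have hBroot : (B.plug σ).rootLabel = Symbol.nonterminal X := by
        apply rootLabel_plug
        rw [hBspine, List.head?_drop, List.getElem?_eq_getElem hj]
        exact congrArg some hgetij.symm
      have hγnodup : γ.spine.Nodup := by
        rw [hγspine]
        exact List.Nodup.sublist (List.drop_sublist _ _) hndj
      have heq' : t = (C.comp A).plug (γ.plug (B.plug σ)) := by
        rw [heq, hD]; simp [CycCtx.plug_comp]
      have hss := hirr (C.comp A) γ X (B.plug σ) hγne hγroot hBroot hγnodup heq'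
      obtain ⟨Y, hYt, hYn⟩ := Set.exists_of_ssubset hss
      have hYt' : Occurs Y (C.plug (D.plug σ)) := heq ▸ hYt
      have hYs : Occurs Y (D.plug σ) := by
        rcases occurs_plug_cases hYt' (A.plug (B.plug σ)) with h'' | h''
        · exfalso
          apply hYn
          show Occurs Y ((C.comp A).plug (B.plug σ))
          rw [CycCtx.plug_comp]
          exact h''
        · exact h''
      have hnotB : ¬ Occurs Y (B.plug σ) := fun hocc =>
        hYn (show Occurs Y ((C.comp A).plug (B.plug σ)) from occurs_plug _ hocc)
      have hsub : {Z : g.NT | Occurs Z (B.plug σ)} ⊂ {Z : g.NT | Occurs Z (D.plug σ)} := by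
        constructor
        · intro Z hZ
          rw [Set.mem_setOf_eq] at hZ ⊢
          rw [hD]
          simp only [CycCtx.plug_comp]
          exact occurs_plug A (occurs_plug γ hZ)
        · intro hcon
          exact hnotB (hcon hYs)
      have hcard : ({Z : g.NT | Occurs Z (B.plug σ)}).ncard + 1 ≤
          ({Z : g.NT | Occurs Z (D.plug σ)}).ncard :=
        Set.ncard_lt_ncard hsub (Set.toFinite _)
      have hlenB : (B.spine ++ sigLab σ).length = L.length - j := by
        rw [hBspine]; simp
      have heq'' : t = ((C.comp A).comp γ).plug (B.plug σ) := by
        rw [heq']; simp [CycCtx.plug_comp]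
      have hrec := ih B ((C.comp A).comp γ) σ (by omega) heq''
      have hjn : j ≤ Fintype.card g.NT := by
        have hlc := hndj.length_le_card
        rw [List.length_take] at hlc
        omega
      have hmul := Nat.mul_le_mul_left (Fintype.card g.NT) hcard
      rw [Nat.mul_add, Nat.mul_one] at hmul
      omega

end Aux2

section Aux3

lemma height_node {T N : Type*} (X : N) (cs : List (DTree T N)) :
    DTree.height (DTree.node X cs) = (cs.map DTree.height).foldr max 0 + 1 := by
  rw [DTree.height]
  congr 1
  simp

lemma numNodes_node {T N : Type*} (X : N) (cs : List (DTree T N)) :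
    DTree.numNodes (DTree.node X cs) = (cs.map DTree.numNodes).sum + 1 := by
  rw [DTree.numNodes]
  congr 1
  simp

lemma le_foldr_max {l : List ℕ} {x : ℕ} (h : x ∈ l) : x ≤ l.foldr max 0 := by
  induction l with
  | nil => cases h
  | cons a l ih =>
    rcases List.mem_cons.1 h with rfl | h
    · exact le_max_left _ _
    · exact le_trans (ih h) (le_max_right _ _)

lemma foldr_max_mem : ∀ (l : List ℕ), l ≠ [] → l.foldr max 0 ∈ l
  | [x], _ => by simp
  | x :: y :: l, _ => by
    have hmem := foldr_max_mem (y :: l) (by simp)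
    rw [List.foldr_cons]
    rcases max_choice x ((y :: l).foldr max 0) with h | h
    · rw [h]; exact List.mem_cons_self
    · rw [h]; exact List.mem_cons_of_mem _ hmem

lemma exists_path_decomp {T N : Type*} :
    ∀ (k : ℕ) (t : DTree T N), t.height ≤ k →
    ∃ (D : CycCtx T N) (σ : DTree T N),
      t = D.plug σ ∧ t.height ≤ (D.spine ++ sigLab σ).length := by
  intro k
  induction k with
  | zero =>
    intro t ht
    exact ⟨.hole, t, rfl, by omega⟩
  | succ k ih =>
    intro t ht
    cases t with
    | leaf s => exact ⟨.hole, .leaf s, rfl, by simp [DTree.height]⟩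
    | node X cs =>
      by_cases hcs : cs = []
      · subst hcs
        refine ⟨.hole, .node X [], rfl, ?_⟩
        simp [height_node, sigLab, CycCtx.spine]
      · have hne : cs.map DTree.height ≠ [] := by simpa using hcs
        have hmem := foldr_max_mem _ hne
        obtain ⟨c, hc, hch⟩ := List.mem_map.1 hmem
        have hhn := height_node X cs
        have hhc : c.height ≤ k := by omega
        obtain ⟨D, σ, hcd, hlen⟩ := ih c hhc
        obtain ⟨l, r, rfl⟩ := List.append_of_mem hc
        refine ⟨.node X l D r, σ, ?_, ?_⟩
        · rw [CycCtx.plug, ← hcd]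
        · have hsp : ((CycCtx.node X l D r).spine ++ sigLab σ).length
              = (D.spine ++ sigLab σ).length + 1 := by
            simp [CycCtx.spine]
          omega

lemma numNodes_le_of_isDeriv {T : Type*} {g : ContextFreeGrammar T}
    (hbin : ∀ r ∈ g.rules, r.output.length ≤ 2) {t : DTree T g.NT}
    (ht : IsDeriv g t) : t.numNodes ≤ 2 ^ (t.height + 1) - 1 := by
  induction ht with
  | leaf s => simp [DTree.numNodes, DTree.height]
  | node X cs r hr hX hout hcs ih =>
    have hlen2 : cs.length ≤ 2 := by
      have hb := hbin r hr
      rw [← hout] at hb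
      simpa using hb
    rw [numNodes_node, height_node]
    set H := (cs.map DTree.height).foldr max 0 with hH
    have hb : ∀ x ∈ cs.map DTree.numNodes, x ≤ 2 ^ (H + 1) - 1 := by
      intro x hx
      obtain ⟨c, hc, rfl⟩ := List.mem_map.1 hx
      have h1 := ih c hc
      have h2 : c.height ≤ H := le_foldr_max (List.mem_map_of_mem hc)
      have h3 : (2:ℕ) ^ (c.height + 1) ≤ 2 ^ (H + 1) :=
        Nat.pow_le_pow_right (by norm_num) (by omega)
      omega
    have hsum := List.sum_le_card_nsmul (cs.map DTree.numNodes) _ hb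
    rw [smul_eq_mul, List.length_map] at hsum
    have hsum2 : (cs.map DTree.numNodes).sum ≤ 2 * (2 ^ (H + 1) - 1) :=
      le_trans hsum (Nat.mul_le_mul_right _ hlen2)
    have hp : (2:ℕ) ^ (H + 1 + 1) = 2 * 2 ^ (H + 1) := by ring
    have h1 : (1:ℕ) ≤ 2 ^ (H + 1) := Nat.one_le_two_pow
    omega

end Aux3

/-- In a grammar with `n` nonterminals whose right-hand sides have length
at most two, every irreducible derivation has all root-to-leaf paths of length at most `n²`
and hence at most `2^(n²+1)` nodes. -/
theorem irreducible_derivation_small {T : Type*} (g : ContextFreeGrammar T) [Fintype g.NT]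
    (hbin : ∀ r ∈ g.rules, r.output.length ≤ 2)
    (t : DTree T g.NT) (ht : IsDeriv g t) (hirr : Irreducible g t) :
    t.height ≤ (Fintype.card g.NT) ^ 2 ∧
    t.numNodes ≤ 2 ^ ((Fintype.card g.NT) ^ 2 + 1) := by
  classical
  have hocc : ({Y : g.NT | Occurs Y t}).ncard ≤ Fintype.card g.NT := by
    have h1 := Set.ncard_le_ncard (Set.subset_univ {Y : g.NT | Occurs Y t}) (Set.toFinite _)
    simpa [Set.ncard_univ] using h1
  obtain ⟨D, σ, hdec, hlen⟩ := exists_path_decomp t.height t le_rfl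
  have hkey := key_bound g hirr (D.spine ++ sigLab σ).length D .hole σ le_rfl
    (by simpa [CycCtx.plug] using hdec)
  have hset : {Y : g.NT | Occurs Y (D.plug σ)} = {Y : g.NT | Occurs Y t} := by rw [hdec]
  rw [hset] at hkey
  have hh : t.height ≤ Fintype.card g.NT ^ 2 := by
    have h2 : Fintype.card g.NT * ({Y : g.NT | Occurs Y t}).ncard ≤
        Fintype.card g.NT ^ 2 := by
      rw [sq]
      exact Nat.mul_le_mul_left _ hocc
    omega
  refine ⟨hh, ?_⟩
  have h4 := numNodes_le_of_isDeriv hbin ht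
  have h5 : (2:ℕ) ^ (t.height + 1) ≤ 2 ^ (Fintype.card g.NT ^ 2 + 1) :=
    Nat.pow_le_pow_right (by norm_num) (by omega)
  exact le_trans h4 (le_trans (Nat.sub_le _ _) h5)


end GVASPaper
end
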